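/- Let d ≥ 1 be an integer, α ∈ (1,2) with α < (d+2)/2, β ∈ ((d+α)/2, d+α), s ∈ (0,1], and let p be a real exponent with max(1, d/β) < p < d/(αs). Define the kernel K(x,y) = |x|^{−αs} · |x−y|^{αs−d} · min(1, |y|/|x−y|)^{β−d} for x, y ∈ ℝ^d with x ≠ 0 and x ≠ y. Then there is a constant C, depending only on d, α, β, s, p, such that for every g ∈ L^p(ℝ^d): ( ∫_{ℝ^d} ( ∫_{ℝ^d} K(x,y) |g(y)| dy )^p dx )^{1/p} ≤ C · ‖g‖_{L^p(ℝ^d)}. -/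

import Mathlib

open MeasureTheory
open Metric ENNReal Set

lemma pow_rpow_comm {t : ℝ} (ht : 0 ≤ t) (n : ℕ) (c : ℝ) : ((t ^ n : ℝ)) ^ c = (t ^ c) ^ n := by
  rw [← Real.rpow_natCast t n, ← Real.rpow_mul ht, mul_comm, Real.rpow_mul ht,
    Real.rpow_natCast]

variable {d : ℕ}

lemma shell_est {A B c : ℝ} (hA : 0 < A) (hc : c ≤ 0) :
    ∫⁻ x in ball (0 : EuclideanSpace ℝ (Fin d)) B \ ball 0 A, ENNReal.ofReal (‖x‖ ^ c)
      ≤ ENNReal.ofReal (A ^ c) * volume (ball (0 : EuclideanSpace ℝ (Fin d)) B) := by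
  calc ∫⁻ x in ball (0 : EuclideanSpace ℝ (Fin d)) B \ ball 0 A, ENNReal.ofReal (‖x‖ ^ c)
      ≤ ∫⁻ _ in ball (0 : EuclideanSpace ℝ (Fin d)) B \ ball 0 A, ENNReal.ofReal (A ^ c) := by
        refine setLIntegral_mono' ((measurableSet_ball).diff measurableSet_ball) fun x hx => ?_
        have hx' : A ≤ ‖x‖ := by simpa [mem_ball_zero_iff] using hx.2
        exact ENNReal.ofReal_le_ofReal (Real.rpow_le_rpow_of_nonpos hA hx' hc)
    _ = ENNReal.ofReal (A ^ c) * volume (ball (0 : EuclideanSpace ℝ (Fin d)) B \ ball 0 A) := by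
        rw [setLIntegral_const]
    _ ≤ _ := mul_le_mul_right (measure_mono diff_subset) _

lemma nontrivial_E (hd : 0 < d) : Nontrivial (EuclideanSpace ℝ (Fin d)) := by
  have : Nonempty (Fin d) := Fin.pos_iff_nonempty.mp hd
  infer_instance

lemma lint_ball_lt_top (hd : 0 < d) {c : ℝ} (hc : -(d : ℝ) < c) {R : ℝ} (hR : 0 < R) :
    ∫⁻ x in ball (0 : EuclideanSpace ℝ (Fin d)) R, ENNReal.ofReal (‖x‖ ^ c) < ⊤ := by
  haveI := nontrivial_E hd
  rcases le_or_gt 0 c with h0 | h0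
  · -- bounded integrand
    have : ∫⁻ x in ball (0 : EuclideanSpace ℝ (Fin d)) R, ENNReal.ofReal (‖x‖ ^ c)
        ≤ ENNReal.ofReal (R ^ c) * volume (ball (0 : EuclideanSpace ℝ (Fin d)) R) := by
      rw [← setLIntegral_const]
      refine setLIntegral_mono' measurableSet_ball fun x hx => ?_
      exact ENNReal.ofReal_le_ofReal
        (Real.rpow_le_rpow (norm_nonneg _) (le_of_lt (mem_ball_zero_iff.1 hx)) h0)
    exact this.trans_lt (ENNReal.mul_lt_top ENNReal.ofReal_lt_top measure_ball_lt_top)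
  · -- shell decomposition
    set v := volume (ball (0 : EuclideanSpace ℝ (Fin d)) 1) with hv
    have hvtop : v < ⊤ := measure_ball_lt_top
    -- the set minus origin is covered by shells
    have hcov : (ball (0 : EuclideanSpace ℝ (Fin d)) R) \ {0} ⊆
        ⋃ n : ℕ, (ball (0 : EuclideanSpace ℝ (Fin d)) (R * (1/2) ^ n) \
          ball 0 (R * (1/2) ^ (n+1))) := by
      rintro x ⟨hx, hx0⟩
      have hxpos : 0 < ‖x‖ := norm_pos_iff.2 (by simpa using hx0)
      have hxR : ‖x‖ < R := mem_ball_zero_iff.1 hx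
      have hex : ∃ n : ℕ, ¬ (‖x‖ < R * (1/2) ^ n) := by
        obtain ⟨n, hn⟩ := exists_pow_lt_of_lt_one (div_pos hxpos hR) (by norm_num : (1/2 : ℝ) < 1)
        refine ⟨n, not_lt.2 ?_⟩
        have h2 : R * (1/2 : ℝ)^n ≤ R * (‖x‖ / R) := (mul_le_mul_iff_right₀ hR).2 hn.le
        have h3 : R * (‖x‖ / R) = ‖x‖ := by field_simp
        linarith
      classical
      let n := Nat.find hex
      have hn : ¬ (‖x‖ < R * (1/2) ^ n) := Nat.find_spec hex
      have hn0 : n ≠ 0 := by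
        intro h
        rw [h] at hn; simp at hn; linarith
      obtain ⟨m, hm⟩ := Nat.exists_eq_succ_of_ne_zero hn0
      have hlt : ‖x‖ < R * (1/2) ^ m := by
        have := Nat.find_min hex (m := m) (by omega)
        simpa using not_not.1 this
      refine mem_iUnion.2 ⟨m, ?_, ?_⟩
      · exact mem_ball_zero_iff.2 hlt
      · intro hmem
        rw [mem_ball_zero_iff] at hmem
        rw [hm] at hn
        exact hn hmem
    have hnull : ∫⁻ x in ball (0 : EuclideanSpace ℝ (Fin d)) R, ENNReal.ofReal (‖x‖ ^ c)
        = ∫⁻ x in ball (0 : EuclideanSpace ℝ (Fin d)) R \ {0}, ENNReal.ofReal (‖x‖ ^ c) := by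
      refine (setLIntegral_congr ?_).symm
      exact diff_ae_eq_self.2 (measure_mono_null inter_subset_right (measure_singleton 0))
    rw [hnull]
    have hle : ∫⁻ x in ball (0 : EuclideanSpace ℝ (Fin d)) R \ {0}, ENNReal.ofReal (‖x‖ ^ c)
        ≤ ∑' n : ℕ, ∫⁻ x in ball (0 : EuclideanSpace ℝ (Fin d)) (R * (1/2) ^ n) \
            ball 0 (R * (1/2) ^ (n+1)), ENNReal.ofReal (‖x‖ ^ c) :=
      (lintegral_mono_set hcov).trans (lintegral_iUnion_le _ _)
    refine hle.trans_lt ?_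
    have hbd : ∀ n : ℕ, ∫⁻ x in ball (0 : EuclideanSpace ℝ (Fin d)) (R * (1/2) ^ n) \
          ball 0 (R * (1/2) ^ (n+1)), ENNReal.ofReal (‖x‖ ^ c)
        ≤ ENNReal.ofReal (R ^ c * (1/2) ^ c * R ^ d) * ENNReal.ofReal (((1/2 : ℝ) ^ (c + (d : ℝ))) ^ n) * v := by
      intro n
      have h1 : (0 : ℝ) < R * (1/2) ^ (n+1) := by positivity
      refine (shell_est h1 h0.le).trans ?_
      rw [Measure.addHaar_ball _ _ (by positivity : (0:ℝ) ≤ R * (1/2)^n), finrank_euclideanSpace_fin,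
        ← hv]
      rw [← mul_assoc]
      refine mul_le_mul_left (le_of_eq ?_) v
      rw [← ENNReal.ofReal_mul (by positivity), ← ENNReal.ofReal_mul (by positivity)]
      congr 1
      have e1 : (R * (1/2) ^ (n+1) : ℝ) ^ c = R ^ c * ((1/2 : ℝ) ^ c) ^ (n+1) := by
        rw [Real.mul_rpow hR.le (by positivity), pow_rpow_comm (by norm_num) (n+1) c]
      have e2 : (R * (1/2) ^ n : ℝ) ^ d = R ^ d * ((1/2 : ℝ) ^ d) ^ n := by
        rw [mul_pow, ← pow_mul, ← pow_mul, Nat.mul_comm]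
      rw [e1, e2, pow_succ]
      have e3 : ((1/2 : ℝ) ^ (c + (d : ℝ))) ^ n = ((1/2 : ℝ) ^ c) ^ n * ((1/2 : ℝ) ^ d) ^ n := by
        rw [Real.rpow_add (by norm_num : (0:ℝ) < 1/2), Real.rpow_natCast, mul_pow]
      rw [e3]; ring
    refine (ENNReal.tsum_le_tsum hbd).trans_lt ?_
    have hu : ENNReal.ofReal (((1/2 : ℝ) ^ (c + (d : ℝ)))) < 1 := by
      rw [ENNReal.ofReal_lt_one]
      exact Real.rpow_lt_one (by norm_num) (by norm_num) (by linarith)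
    calc ∑' n : ℕ, ENNReal.ofReal (R ^ c * (1/2) ^ c * R ^ d) *
            ENNReal.ofReal (((1/2 : ℝ) ^ (c + (d : ℝ))) ^ n) * v
        = ENNReal.ofReal (R ^ c * (1/2) ^ c * R ^ d) * v *
            ∑' n : ℕ, (ENNReal.ofReal ((1/2 : ℝ) ^ (c + (d : ℝ)))) ^ n := by
          rw [← ENNReal.tsum_mul_left]
          congr 1 with n
          rw [ENNReal.ofReal_pow (by positivity)]
          ring
      _ < ⊤ := by
          rw [ENNReal.tsum_geometric]
          exact ENNReal.mul_lt_top (ENNReal.mul_lt_top ENNReal.ofReal_lt_top hvtop)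
            (ENNReal.inv_lt_top.2 (tsub_pos_iff_lt.2 hu))

lemma lint_compl_lt_top (hd : 0 < d) {c : ℝ} (hc : c < -(d : ℝ)) {R : ℝ} (hR : 0 < R) :
    ∫⁻ x in (ball (0 : EuclideanSpace ℝ (Fin d)) R)ᶜ, ENNReal.ofReal (‖x‖ ^ c) < ⊤ := by
  haveI := nontrivial_E hd
  have h0 : c < 0 := by
    have : (0:ℝ) ≤ d := Nat.cast_nonneg d
    linarith
  set v := volume (ball (0 : EuclideanSpace ℝ (Fin d)) 1) with hv
  have hvtop : v < ⊤ := measure_ball_lt_top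
  have hcov : (ball (0 : EuclideanSpace ℝ (Fin d)) R)ᶜ ⊆
      ⋃ n : ℕ, (ball (0 : EuclideanSpace ℝ (Fin d)) (R * 2 ^ (n+1)) \ ball 0 (R * 2 ^ n)) := by
    intro x hx
    have hxR : R ≤ ‖x‖ := by
      have := hx
      simp only [mem_compl_iff, mem_ball_zero_iff, not_lt] at this
      exact this
    have hex : ∃ n : ℕ, ‖x‖ < R * 2 ^ n := by
      obtain ⟨n, hn⟩ := pow_unbounded_of_one_lt (‖x‖ / R) (by norm_num : (1:ℝ) < 2)
      refine ⟨n, ?_⟩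
      have := (div_lt_iff₀ hR).1 hn
      linarith [this]
    classical
    let n := Nat.find hex
    have hn : ‖x‖ < R * 2 ^ n := Nat.find_spec hex
    have hn0 : n ≠ 0 := by
      intro h
      rw [h] at hn; simp at hn; linarith
    obtain ⟨m, hm⟩ := Nat.exists_eq_succ_of_ne_zero hn0
    have hge : ¬ (‖x‖ < R * 2 ^ m) := Nat.find_min hex (by omega)
    refine mem_iUnion.2 ⟨m, ?_, ?_⟩
    · rw [mem_ball_zero_iff]
      have : R * 2 ^ n = R * 2 ^ (m+1) := by rw [hm]
      rw [← this]; exact hn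
    · intro hmem
      exact hge (mem_ball_zero_iff.1 hmem)
  have hle : ∫⁻ x in (ball (0 : EuclideanSpace ℝ (Fin d)) R)ᶜ, ENNReal.ofReal (‖x‖ ^ c)
      ≤ ∑' n : ℕ, ∫⁻ x in ball (0 : EuclideanSpace ℝ (Fin d)) (R * 2 ^ (n+1)) \
          ball 0 (R * 2 ^ n), ENNReal.ofReal (‖x‖ ^ c) :=
    (lintegral_mono_set hcov).trans (lintegral_iUnion_le _ _)
  refine hle.trans_lt ?_
  have hbd : ∀ n : ℕ, ∫⁻ x in ball (0 : EuclideanSpace ℝ (Fin d)) (R * 2 ^ (n+1)) \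
        ball 0 (R * 2 ^ n), ENNReal.ofReal (‖x‖ ^ c)
      ≤ ENNReal.ofReal (R ^ c * R ^ d * 2 ^ d) *
          ENNReal.ofReal (((2 : ℝ) ^ (c + (d : ℝ))) ^ n) * v := by
    intro n
    have h1 : (0 : ℝ) < R * 2 ^ n := by positivity
    refine (shell_est h1 h0.le).trans ?_
    rw [Measure.addHaar_ball _ _ (by positivity : (0:ℝ) ≤ R * 2 ^ (n+1)),
      finrank_euclideanSpace_fin, ← hv, ← mul_assoc]
    refine mul_le_mul_left (le_of_eq ?_) v
    rw [← ENNReal.ofReal_mul (by positivity), ← ENNReal.ofReal_mul (by positivity)]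
    congr 1
    have e1 : (R * 2 ^ n : ℝ) ^ c = R ^ c * ((2 : ℝ) ^ c) ^ n := by
      rw [Real.mul_rpow hR.le (by positivity), pow_rpow_comm (by norm_num) n c]
    have e2 : (R * 2 ^ (n+1) : ℝ) ^ d = R ^ d * ((2 : ℝ) ^ d) ^ (n+1) := by
      rw [mul_pow, ← pow_mul, ← pow_mul, Nat.mul_comm]
    have e3 : ((2 : ℝ) ^ (c + (d : ℝ))) ^ n = ((2 : ℝ) ^ c) ^ n * ((2 : ℝ) ^ d) ^ n := by
      rw [Real.rpow_add (by norm_num : (0:ℝ) < 2), Real.rpow_natCast, mul_pow]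
    rw [e1, e2, e3, pow_succ]
    ring
  refine (ENNReal.tsum_le_tsum hbd).trans_lt ?_
  have hu : ENNReal.ofReal (((2 : ℝ) ^ (c + (d : ℝ)))) < 1 := by
    rw [ENNReal.ofReal_lt_one]
    exact Real.rpow_lt_one_of_one_lt_of_neg (by norm_num) (by linarith)
  calc ∑' n : ℕ, ENNReal.ofReal (R ^ c * R ^ d * 2 ^ d) *
          ENNReal.ofReal (((2 : ℝ) ^ (c + (d : ℝ))) ^ n) * v
      = ENNReal.ofReal (R ^ c * R ^ d * 2 ^ d) * v *
          ∑' n : ℕ, (ENNReal.ofReal ((2 : ℝ) ^ (c + (d : ℝ)))) ^ n := by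
        rw [← ENNReal.tsum_mul_left]
        congr 1 with n
        rw [ENNReal.ofReal_pow (by positivity)]
        ring
    _ < ⊤ := by
        rw [ENNReal.tsum_geometric]
        exact ENNReal.mul_lt_top (ENNReal.mul_lt_top ENNReal.ofReal_lt_top hvtop)
          (ENNReal.inv_lt_top.2 (tsub_pos_iff_lt.2 hu))

lemma schur_test {X : Type*} [MeasurableSpace X] {μ : Measure X} [SigmaFinite μ]
    {K : X → X → ℝ≥0∞} (hK : Measurable (Function.uncurry K))
    {h : X → ℝ≥0∞} (hh : Measurable h)
    (hh' : ∀ᵐ x ∂μ, 0 < h x ∧ h x < ⊤)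
    {p q : ℝ} (hpq : p.HolderConjugate q)
    {A B : ℝ≥0∞} (hA : A ≠ ⊤) (hB : B ≠ ⊤)
    (h1 : ∀ᵐ x ∂μ, ∫⁻ y, K x y * (h y) ^ q ∂μ ≤ A * (h x) ^ q)
    (h2 : ∀ᵐ y ∂μ, ∫⁻ x, K x y * (h x) ^ p ∂μ ≤ B * (h y) ^ p)
    {f : X → ℝ≥0∞} (hf : Measurable f) :
    ∫⁻ x, (∫⁻ y, K x y * f y ∂μ) ^ p ∂μ ≤ A ^ (p / q) * B * ∫⁻ y, (f y) ^ p ∂μ := by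
  have hp0 : 0 < p := hpq.pos
  have hq0 : 0 < q := hpq.symm.pos
  set Φ : X → ℝ≥0∞ := fun x => ∫⁻ y, (f y) ^ p * ((h y)⁻¹) ^ p * K x y ∂μ with hΦ
  -- Step 1: Hölder for the inner integral
  have claim1 : ∀ x, ∫⁻ y, K x y * f y ∂μ
      ≤ (∫⁻ y, K x y * (h y) ^ q ∂μ) ^ (1 / q) * (Φ x) ^ (1 / p) := by
    intro x
    have hKx : Measurable (K x) := hK.of_uncurry_left
    set F : X → ℝ≥0∞ := fun y => (K x y) ^ (1 / q) * h y with hF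
    set G : X → ℝ≥0∞ := fun y => (K x y) ^ (1 / p) * (f y * (h y)⁻¹) with hG
    have hFm : AEMeasurable F μ := ((hKx.pow_const _).mul hh).aemeasurable
    have hGm : AEMeasurable G μ :=
      ((hKx.pow_const _).mul (hf.mul hh.inv)).aemeasurable
    have hold := ENNReal.lintegral_mul_le_Lp_mul_Lq μ hpq.symm hFm hGm
    have heq : ∫⁻ y, K x y * f y ∂μ = ∫⁻ y, (F * G) y ∂μ := by
      refine lintegral_congr_ae ?_
      filter_upwards [hh'] with y ⟨hy0, hyt⟩
      have key : F y * G y = K x y * f y := by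
        simp only [hF, hG]
        calc (K x y) ^ (1/q) * h y * ((K x y) ^ (1/p) * (f y * (h y)⁻¹))
            = ((K x y) ^ (1/q) * (K x y) ^ (1/p)) * (h y * (h y)⁻¹) * f y := by ring
          _ = K x y * f y := by
              rw [← ENNReal.rpow_add_of_nonneg (1/q) (1/p) (by positivity) (by positivity),
                ENNReal.mul_inv_cancel hy0.ne' hyt.ne]
              rw [show 1/q + 1/p = 1 by rw [one_div, one_div]; exact hpq.symm.inv_add_inv_eq_one]
              rw [ENNReal.rpow_one, mul_one]
      simpa [Pi.mul_apply] using key.symm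
    have hFq : ∫⁻ y, F y ^ q ∂μ = ∫⁻ y, K x y * (h y) ^ q ∂μ := by
      refine lintegral_congr fun y => ?_
      rw [hF]
      rw [ENNReal.mul_rpow_of_nonneg _ _ hq0.le, ← ENNReal.rpow_mul,
        one_div_mul_cancel hq0.ne', ENNReal.rpow_one]
    have hGp : ∫⁻ y, G y ^ p ∂μ = Φ x := by
      rw [hΦ]
      refine lintegral_congr fun y => ?_
      rw [hG]
      rw [ENNReal.mul_rpow_of_nonneg _ _ hp0.le, ← ENNReal.rpow_mul,
        one_div_mul_cancel hp0.ne', ENNReal.rpow_one,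
        ENNReal.mul_rpow_of_nonneg _ _ hp0.le]
      ring
    rw [heq]
    calc ∫⁻ y, (F * G) y ∂μ
        ≤ (∫⁻ y, F y ^ q ∂μ) ^ (1/q) * (∫⁻ y, G y ^ p ∂μ) ^ (1/p) := hold
      _ = (∫⁻ y, K x y * (h y) ^ q ∂μ) ^ (1/q) * (Φ x) ^ (1/p) := by rw [hFq, hGp]
  -- Step 2: raise to power p, use h1
  have claim2 : ∀ᵐ x ∂μ, (∫⁻ y, K x y * f y ∂μ) ^ p ≤ A ^ (p/q) * ((h x) ^ p * Φ x) := by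
    filter_upwards [h1] with x hx1
    calc (∫⁻ y, K x y * f y ∂μ) ^ p
        ≤ ((∫⁻ y, K x y * (h y) ^ q ∂μ) ^ (1/q) * (Φ x) ^ (1/p)) ^ p :=
          ENNReal.rpow_le_rpow (claim1 x) hp0.le
      _ = ((∫⁻ y, K x y * (h y) ^ q ∂μ) ^ (1/q)) ^ p * Φ x := by
          rw [ENNReal.mul_rpow_of_nonneg _ _ hp0.le, ← ENNReal.rpow_mul (Φ x),
            one_div_mul_cancel hp0.ne', ENNReal.rpow_one]
      _ ≤ ((A * (h x) ^ q) ^ (1/q)) ^ p * Φ x := by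
          exact mul_le_mul_left (ENNReal.rpow_le_rpow (ENNReal.rpow_le_rpow hx1
            (by positivity : (0:ℝ) ≤ 1/q)) hp0.le) _
      _ = A ^ (p/q) * ((h x) ^ p * Φ x) := by
          rw [← ENNReal.rpow_mul, ENNReal.mul_rpow_of_nonneg _ _ (by positivity : (0:ℝ) ≤ 1/q * p),
            ← ENNReal.rpow_mul (h x), show (1:ℝ)/q * p = p/q by ring,
            show q * (p/q) = p by rw [mul_comm]; exact div_mul_cancel₀ p hq0.ne']
          ring
  -- Step 3: integrate, swap, use h2
  have hApq : A ^ (p/q) ≠ ⊤ := ENNReal.rpow_ne_top_of_nonneg (by positivity) hA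
  have hjoint : Measurable (Function.uncurry fun x y =>
      (f y) ^ p * ((h y)⁻¹) ^ p * K x y * (h x) ^ p) := by
    apply Measurable.mul
    · apply Measurable.mul
      · exact (((hf.comp measurable_snd).pow_const _).mul
          (((hh.comp measurable_snd).inv).pow_const _))
      · exact hK
    · exact (hh.comp measurable_fst).pow_const _
  calc ∫⁻ x, (∫⁻ y, K x y * f y ∂μ) ^ p ∂μ
      ≤ ∫⁻ x, A ^ (p/q) * ((h x) ^ p * Φ x) ∂μ := lintegral_mono_ae claim2
    _ = A ^ (p/q) * ∫⁻ x, (h x) ^ p * Φ x ∂μ := lintegral_const_mul' _ _ hApq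
    _ = A ^ (p/q) * ∫⁻ x, ∫⁻ y, (f y) ^ p * ((h y)⁻¹) ^ p * K x y * (h x) ^ p ∂μ ∂μ := by
        congr 1
        refine lintegral_congr fun x => ?_
        rw [lintegral_mul_const (f := fun y => (f y) ^ p * ((h y)⁻¹) ^ p * K x y) _
          ((((hf.pow_const _).mul (hh.inv.pow_const _))).mul hK.of_uncurry_left)]
        exact mul_comm _ _
    _ = A ^ (p/q) * ∫⁻ y, ∫⁻ x, (f y) ^ p * ((h y)⁻¹) ^ p * K x y * (h x) ^ p ∂μ ∂μ := by
        congr 1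
        exact lintegral_lintegral_swap hjoint.aemeasurable
    _ = A ^ (p/q) * ∫⁻ y, (f y) ^ p * ((h y)⁻¹) ^ p * ∫⁻ x, K x y * (h x) ^ p ∂μ ∂μ := by
        congr 1
        refine lintegral_congr fun y => ?_
        rw [← lintegral_const_mul (f := fun x => K x y * (h x) ^ p) _ (hK.of_uncurry_right.mul (hh.pow_const _))]
        refine lintegral_congr fun x => ?_
        ring
    _ ≤ A ^ (p/q) * ∫⁻ y, (f y) ^ p * ((h y)⁻¹) ^ p * (B * (h y) ^ p) ∂μ := by
        refine mul_le_mul_right (lintegral_mono_ae ?_) _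
        filter_upwards [h2] with y hy2
        exact mul_le_mul_right hy2 _
    _ = A ^ (p/q) * ∫⁻ y, B * (f y) ^ p ∂μ := by
        congr 1
        refine lintegral_congr_ae ?_
        filter_upwards [hh'] with y ⟨hy0, hyt⟩
        calc (f y) ^ p * ((h y)⁻¹) ^ p * (B * (h y) ^ p)
            = B * (f y) ^ p * (((h y)⁻¹) ^ p * (h y) ^ p) := by ring
          _ = B * (f y) ^ p := by
              rw [← ENNReal.mul_rpow_of_nonneg _ _ hp0.le,
                ENNReal.inv_mul_cancel hy0.ne' hyt.ne, ENNReal.one_rpow, mul_one]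
    _ = A ^ (p/q) * (B * ∫⁻ y, (f y) ^ p ∂μ) := by
        rw [lintegral_const_mul' _ _ hB]
    _ = A ^ (p/q) * B * ∫⁻ y, (f y) ^ p ∂μ := by rw [mul_assoc]

lemma lintegral_comp_smul' {d : ℕ} (f : EuclideanSpace ℝ (Fin d) → ℝ≥0∞) {R : ℝ} (hR : R ≠ 0) :
    ∫⁻ x, f (R • x) = ENNReal.ofReal |(R ^ d)⁻¹| * ∫⁻ x, f x := by
  have := lintegral_map_equiv (μ := (volume : Measure (EuclideanSpace ℝ (Fin d)))) f
    (Homeomorph.smul (isUnit_iff_ne_zero.2 hR).unit).toMeasurableEquiv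
  have heq : (⇑(Homeomorph.smul (isUnit_iff_ne_zero.2 hR).unit).toMeasurableEquiv :
      EuclideanSpace ℝ (Fin d) → EuclideanSpace ℝ (Fin d)) = fun x => R • x := by
    ext x; simp [Units.smul_def]
  rw [heq] at this
  rw [← this, Measure.map_addHaar_smul volume hR, lintegral_smul_measure,
    finrank_euclideanSpace_fin, smul_eq_mul]

lemma lintegral_eq_smul {d : ℕ} (f : EuclideanSpace ℝ (Fin d) → ℝ≥0∞) {R : ℝ} (hR : 0 < R) :
    ∫⁻ x, f x = ENNReal.ofReal (R ^ d) * ∫⁻ x, f (R • x) := by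
  rw [lintegral_comp_smul' f hR.ne', ← mul_assoc, abs_of_nonneg (inv_nonneg.2 (pow_nonneg hR.le _)),
    ← ENNReal.ofReal_mul (pow_nonneg hR.le _), mul_inv_cancel₀ (pow_pos hR _).ne',
    ENNReal.ofReal_one, one_mul]


lemma inv_two_rpow (c : ℝ) : ((2:ℝ)⁻¹) ^ c = 2 ^ (-c) := by
  rw [Real.inv_rpow (by norm_num), ← Real.rpow_neg (by norm_num)]

lemma min_ratio_nonneg (x y : ℝ) (hx : 0 ≤ x) (hy : 0 ≤ y) : 0 ≤ min 1 (x / y) :=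
  le_min zero_le_one (div_nonneg hx hy)

noncomputable def Cbr (b dd : ℝ) : ℝ := 2^(b-dd) + 3^(dd-b) + (2/3 : ℝ)^(b-dd) + 1

lemma Cbr_pos (b dd : ℝ) : 0 < Cbr b dd := by unfold Cbr; positivity

lemma minterm_mid {b dd r1 r2 : ℝ} (h1 : 1/2 ≤ r1) (h13 : r1 ≤ 3) (hr2 : 0 < r2) (hr22 : r2 ≤ 2) :
    (min 1 (r2 / r1)) ^ (b - dd) ≤ Cbr b dd * r2 ^ (b - dd) := by
  have hr1 : (0:ℝ) < r1 := lt_of_lt_of_le (by norm_num) h1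
  unfold Cbr
  rcases le_or_gt dd b with hdb | hbd
  · have h2 : min 1 (r2/r1) ≤ 2 * r2 := by
      refine (min_le_right _ _).trans ?_
      rw [div_le_iff₀ hr1]
      nlinarith
    have h3 : (min 1 (r2/r1)) ^ (b-dd) ≤ (2*r2) ^ (b-dd) :=
      Real.rpow_le_rpow (min_ratio_nonneg _ _ hr2.le hr1.le) h2 (by linarith)
    refine h3.trans ?_
    rw [Real.mul_rpow (by norm_num) hr2.le]
    have : (2:ℝ)^(b-dd) ≤ 2^(b-dd) + 3^(dd-b) + (2/3 : ℝ)^(b-dd) + 1 := by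
      have u1 : (0:ℝ) ≤ 3^(dd-b) := by positivity
      have u2 : (0:ℝ) ≤ (2/3 : ℝ)^(b-dd) := by positivity
      linarith
    exact mul_le_mul_of_nonneg_right this (Real.rpow_nonneg hr2.le _)
  · have h2 : r2/3 ≤ min 1 (r2/r1) := by
      refine le_min (by linarith) ?_
      exact div_le_div_of_nonneg_left hr2.le hr1 h13
    have h3 : (min 1 (r2/r1)) ^ (b-dd) ≤ (r2/3) ^ (b-dd) :=
      Real.rpow_le_rpow_of_nonpos (by linarith) h2 (by linarith)
    refine h3.trans ?_
    rw [Real.div_rpow hr2.le (by norm_num), div_eq_mul_inv, mul_comm,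
      ← Real.rpow_neg (by norm_num : (0:ℝ) ≤ 3), neg_sub]
    have : (3:ℝ)^(dd-b) ≤ 2^(b-dd) + 3^(dd-b) + (2/3 : ℝ)^(b-dd) + 1 := by
      have u1 : (0:ℝ) ≤ 2^(b-dd) := by positivity
      have u2 : (0:ℝ) ≤ (2/3 : ℝ)^(b-dd) := by positivity
      linarith
    exact mul_le_mul_of_nonneg_right this (Real.rpow_nonneg hr2.le _)

lemma minterm_out {b dd m : ℝ} (hm : 1/3 ≤ m) (hm1 : m ≤ 1) (h0 : 0 ≤ m) :
    m ^ (b - dd) ≤ Cbr b dd := by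
  unfold Cbr
  rcases le_or_gt dd b with hdb | hbd
  · have : m ^ (b-dd) ≤ 1 := Real.rpow_le_one h0 hm1 (by linarith)
    have h' : (0:ℝ) ≤ 2^(b-dd) + 3^(dd-b) + (2/3:ℝ)^(b-dd) := by positivity
    linarith
  · have h3 : m ^ (b-dd) ≤ ((1:ℝ)/3) ^ (b-dd) :=
      Real.rpow_le_rpow_of_nonpos (by norm_num) hm (by linarith)
    rw [one_div, Real.inv_rpow (by norm_num), ← Real.rpow_neg (by norm_num), neg_sub] at h3
    have u1 : (0:ℝ) ≤ 2^(b-dd) := by positivity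
    have u2 : (0:ℝ) ≤ (2/3 : ℝ)^(b-dd) := by positivity
    linarith

noncomputable def phi1 (d : ℕ) (a c : ℝ) : EuclideanSpace ℝ (Fin d) → ℝ≥0∞ :=
  fun u => (ball (0 : EuclideanSpace ℝ (Fin d)) (1/2)).indicator
    (fun u => ENNReal.ofReal (2^c * ‖u‖^(a-(d:ℝ)))) u

noncomputable def psi1 (d : ℕ) (a b γ : ℝ) : EuclideanSpace ℝ (Fin d) → ℝ≥0∞ :=
  fun z => (ball (0 : EuclideanSpace ℝ (Fin d)) 2).indicator
    (fun z => ENNReal.ofReal ((2^((d:ℝ)-a) * Cbr b d) * ‖z‖^(b-(d:ℝ)-γ))) z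

noncomputable def psi2 (d : ℕ) (a b γ : ℝ) : EuclideanSpace ℝ (Fin d) → ℝ≥0∞ :=
  fun z => ((ball (0 : EuclideanSpace ℝ (Fin d)) 2)ᶜ).indicator
    (fun z => ENNReal.ofReal ((2^((d:ℝ)-a) * Cbr b d) * ‖z‖^(a-(d:ℝ)-γ))) z

lemma pointwise_C1 {d : ℕ} {a b γ : ℝ} (ha : 0 < a) (haγ : a < γ) (hγd : γ < (d:ℝ))
    (hγ0 : 0 < γ) (ω z : EuclideanSpace ℝ (Fin d)) (hω : ‖ω‖ = 1) :
    ENNReal.ofReal (‖ω - z‖ ^ (a - (d:ℝ)) * (min 1 (‖z‖ / ‖ω - z‖)) ^ (b - (d:ℝ)) * ‖z‖ ^ (-γ))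
      ≤ phi1 d a γ (z - ω) + (psi1 d a b γ z + psi2 d a b γ z) := by
  have hCb0 : 0 < Cbr b d := Cbr_pos b d
  have had : a - (d:ℝ) < 0 := by linarith
  by_cases h1 : ‖ω - z‖ < 1/2
  · -- inner region
    have hz2 : z - ω ∈ ball (0 : EuclideanSpace ℝ (Fin d)) (1/2) := by
      rw [mem_ball_zero_iff, norm_sub_rev]; exact h1
    refine le_trans ?_ le_self_add
    rw [phi1, indicator_of_mem hz2, norm_sub_rev z ω]
    refine ENNReal.ofReal_le_ofReal ?_
    rcases eq_or_lt_of_le (norm_nonneg (ω - z)) with h0 | hr1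
    · rw [← h0, Real.zero_rpow had.ne]
      simp only [zero_mul]
      positivity
    · have hz : 1/2 ≤ ‖z‖ := by
        have := norm_sub_norm_le ω z
        rw [hω] at this
        linarith
      have hmin : min 1 (‖z‖ / ‖ω - z‖) = 1 := by
        refine min_eq_left ?_
        rw [le_div_iff₀ hr1]
        linarith
      rw [hmin, Real.one_rpow, mul_one]
      have hb2 : ‖z‖ ^ (-γ) ≤ 2 ^ γ := by
        have h' := Real.rpow_le_rpow_of_nonpos (by norm_num : (0:ℝ) < 1/2) hz
          (neg_nonpos.2 hγ0.le)
        rw [one_div, inv_two_rpow, neg_neg] at h'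
        exact h'
      calc ‖ω - z‖ ^ (a - (d:ℝ)) * ‖z‖ ^ (-γ)
          ≤ ‖ω - z‖ ^ (a - (d:ℝ)) * 2 ^ γ :=
            mul_le_mul_of_nonneg_left hb2 (Real.rpow_nonneg (norm_nonneg _) _)
        _ = 2 ^ γ * ‖ω - z‖ ^ (a - (d:ℝ)) := mul_comm _ _
  · have hr1 : 1/2 ≤ ‖ω - z‖ := not_lt.1 h1
    have hr1pos : (0:ℝ) < ‖ω - z‖ := lt_of_lt_of_le (by norm_num) hr1
    have hb1base : ‖ω - z‖ ^ (a - (d:ℝ)) ≤ 2 ^ ((d:ℝ)-a) := by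
      have h' := Real.rpow_le_rpow_of_nonpos (by norm_num : (0:ℝ) < 1/2) hr1 had.le
      rw [one_div, inv_two_rpow, neg_sub] at h'
      exact h'
    by_cases h2 : ‖z‖ < 2
    · -- middle region
      have hz2 : z ∈ ball (0 : EuclideanSpace ℝ (Fin d)) 2 := mem_ball_zero_iff.2 h2
      refine le_trans ?_ (le_add_left le_self_add)
      rw [psi1, indicator_of_mem hz2]
      refine ENNReal.ofReal_le_ofReal ?_
      rcases eq_or_lt_of_le (norm_nonneg z) with h0 | hr2
      · rw [← h0, Real.zero_rpow (neg_ne_zero.2 hγ0.ne'), mul_zero]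
        positivity
      · have hr13 : ‖ω - z‖ ≤ 3 := by
          have := norm_sub_le ω z; rw [hω] at this; linarith
        have bound2 := minterm_mid (b := b) (dd := (d:ℝ)) hr1 hr13 hr2 h2.le
        have t1 : ‖ω - z‖ ^ (a-(d:ℝ)) * (min 1 (‖z‖/‖ω - z‖)) ^ (b-(d:ℝ))
            ≤ 2^((d:ℝ)-a) * (Cbr b d * ‖z‖^(b-(d:ℝ))) :=
          mul_le_mul hb1base bound2
            (Real.rpow_nonneg (min_ratio_nonneg _ _ (norm_nonneg _) (norm_nonneg _)) _)
            (by positivity)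
        calc ‖ω - z‖ ^ (a-(d:ℝ)) * (min 1 (‖z‖/‖ω - z‖)) ^ (b-(d:ℝ)) * ‖z‖ ^ (-γ)
            ≤ 2^((d:ℝ)-a) * (Cbr b d * ‖z‖^(b-(d:ℝ))) * ‖z‖ ^ (-γ) :=
              mul_le_mul_of_nonneg_right t1 (Real.rpow_nonneg (norm_nonneg _) _)
          _ = 2^((d:ℝ)-a) * Cbr b d * ‖z‖^(b-(d:ℝ)-γ) := by
              rw [show b - (d:ℝ) - γ = (b - (d:ℝ)) + (-γ) by ring, Real.rpow_add hr2]
              ring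
    · -- outer region
      have hz2 : z ∈ (ball (0 : EuclideanSpace ℝ (Fin d)) 2)ᶜ := fun h => h2 (mem_ball_zero_iff.1 h)
      refine le_trans ?_ (le_add_left (le_add_left (le_refl _)))
      rw [psi2, indicator_of_mem hz2]
      refine ENNReal.ofReal_le_ofReal ?_
      have hr22 : 2 ≤ ‖z‖ := not_lt.1 h2
      have hr2pos : (0:ℝ) < ‖z‖ := by linarith
      have hge : ‖z‖ - 1 ≤ ‖ω - z‖ := by
        have := norm_sub_norm_le z ω
        rw [norm_sub_rev z ω, hω] at this
        linarith
      have h12 : ‖z‖/2 ≤ ‖ω - z‖ := by linarith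
      have bound1 : ‖ω - z‖ ^ (a-(d:ℝ)) ≤ 2^((d:ℝ)-a) * ‖z‖^(a-(d:ℝ)) := by
        have h' := Real.rpow_le_rpow_of_nonpos (by positivity : (0:ℝ) < ‖z‖/2) h12 had.le
        rw [Real.div_rpow (norm_nonneg _) (by norm_num), div_eq_mul_inv,
          ← Real.rpow_neg (by norm_num : (0:ℝ) ≤ 2), neg_sub, mul_comm] at h'
        exact h'
      have hm : 1/3 ≤ min 1 (‖z‖/‖ω - z‖) := by
        refine le_min (by norm_num) ?_
        rw [le_div_iff₀ hr1pos]
        have h3 : ‖ω - z‖ ≤ 1 + ‖z‖ := by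
          have := norm_sub_le ω z; rw [hω] at this; linarith
        nlinarith
      have bound2 : (min 1 (‖z‖/‖ω - z‖)) ^ (b-(d:ℝ)) ≤ Cbr b d :=
        minterm_out hm (min_le_left _ _) (min_ratio_nonneg _ _ (norm_nonneg _) (norm_nonneg _))
      have t1 : ‖ω - z‖ ^ (a-(d:ℝ)) * (min 1 (‖z‖/‖ω - z‖)) ^ (b-(d:ℝ))
          ≤ (2^((d:ℝ)-a) * ‖z‖^(a-(d:ℝ))) * Cbr b d :=
        mul_le_mul bound1 bound2
          (Real.rpow_nonneg (min_ratio_nonneg _ _ (norm_nonneg _) (norm_nonneg _)) _)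
          (by positivity)
      calc ‖ω - z‖ ^ (a-(d:ℝ)) * (min 1 (‖z‖/‖ω - z‖)) ^ (b-(d:ℝ)) * ‖z‖ ^ (-γ)
          ≤ (2^((d:ℝ)-a) * ‖z‖^(a-(d:ℝ))) * Cbr b d * ‖z‖ ^ (-γ) :=
            mul_le_mul_of_nonneg_right t1 (Real.rpow_nonneg (norm_nonneg _) _)
        _ = 2^((d:ℝ)-a) * Cbr b d * ‖z‖^(a-(d:ℝ)-γ) := by
            rw [show a - (d:ℝ) - γ = (a - (d:ℝ)) + (-γ) by ring, Real.rpow_add hr2pos]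
            ring

noncomputable def psi3 (d : ℕ) (a b δ : ℝ) : EuclideanSpace ℝ (Fin d) → ℝ≥0∞ :=
  fun u => (ball (0 : EuclideanSpace ℝ (Fin d)) 2).indicator
    (fun u => ENNReal.ofReal ((2^((d:ℝ)-a) * Cbr b d) * ‖u‖^(-δ))) u

noncomputable def psi4 (d : ℕ) (a b δ : ℝ) : EuclideanSpace ℝ (Fin d) → ℝ≥0∞ :=
  fun u => ((ball (0 : EuclideanSpace ℝ (Fin d)) 2)ᶜ).indicator
    (fun u => ENNReal.ofReal ((2^(a-b) + 2^(b-a)) * ‖u‖^(a-b-δ))) u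

lemma pointwise_C2 {d : ℕ} {a b δ : ℝ} (had : a < (d:ℝ)) (hδ0 : 0 < δ)
    (ω u : EuclideanSpace ℝ (Fin d)) (hω : ‖ω‖ = 1) :
    ENNReal.ofReal (‖u‖ ^ (-δ) * ‖u - ω‖ ^ (a - (d:ℝ)) * (min 1 (1 / ‖u - ω‖)) ^ (b - (d:ℝ)))
      ≤ phi1 d a δ (u - ω) + (psi3 d a b δ u + psi4 d a b δ u) := by
  have hCb0 : 0 < Cbr b d := Cbr_pos b d
  have had' : a - (d:ℝ) < 0 := by linarith
  have hmnn : 0 ≤ min 1 (1 / ‖u - ω‖) := le_min zero_le_one (by positivity)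
  by_cases h1 : ‖u - ω‖ < 1/2
  · -- near the singularity
    have hz2 : u - ω ∈ ball (0 : EuclideanSpace ℝ (Fin d)) (1/2) := mem_ball_zero_iff.2 h1
    refine le_trans ?_ le_self_add
    rw [phi1, indicator_of_mem hz2]
    refine ENNReal.ofReal_le_ofReal ?_
    rcases eq_or_lt_of_le (norm_nonneg (u - ω)) with h0 | hr1
    · rw [← h0, Real.zero_rpow had'.ne]
      simp only [mul_zero, zero_mul]
      positivity
    · have hu : 1/2 ≤ ‖u‖ := by
        have := norm_sub_norm_le ω u
        rw [norm_sub_rev ω u, hω] at this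
        linarith
      have hmin : min 1 (1 / ‖u - ω‖) = 1 := by
        refine min_eq_left ?_
        rw [le_div_iff₀ hr1]
        linarith
      rw [hmin, Real.one_rpow, mul_one]
      have hb2 : ‖u‖ ^ (-δ) ≤ 2 ^ δ := by
        have h' := Real.rpow_le_rpow_of_nonpos (by norm_num : (0:ℝ) < 1/2) hu
          (neg_nonpos.2 hδ0.le)
        rw [one_div, inv_two_rpow, neg_neg] at h'
        exact h'
      exact mul_le_mul_of_nonneg_right hb2 (Real.rpow_nonneg (norm_nonneg _) _)
  · have hr1 : 1/2 ≤ ‖u - ω‖ := not_lt.1 h1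
    have hr1pos : (0:ℝ) < ‖u - ω‖ := lt_of_lt_of_le (by norm_num) hr1
    have hb1base : ‖u - ω‖ ^ (a - (d:ℝ)) ≤ 2 ^ ((d:ℝ)-a) := by
      have h' := Real.rpow_le_rpow_of_nonpos (by norm_num : (0:ℝ) < 1/2) hr1 had'.le
      rw [one_div, inv_two_rpow, neg_sub] at h'
      exact h'
    by_cases h2 : ‖u‖ < 2
    · -- middle region
      have hz2 : u ∈ ball (0 : EuclideanSpace ℝ (Fin d)) 2 := mem_ball_zero_iff.2 h2
      refine le_trans ?_ (le_add_left le_self_add)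
      rw [psi3, indicator_of_mem hz2]
      refine ENNReal.ofReal_le_ofReal ?_
      have hr13 : ‖u - ω‖ ≤ 3 := by
        have := norm_sub_le u ω; rw [hω] at this; linarith
      have hm : 1/3 ≤ min 1 (1 / ‖u - ω‖) := by
        refine le_min (by norm_num) ?_
        rw [le_div_iff₀ hr1pos]
        linarith
      have bound2 : (min 1 (1 / ‖u - ω‖)) ^ (b-(d:ℝ)) ≤ Cbr b d :=
        minterm_out hm (min_le_left _ _) hmnn
      have t1 : ‖u - ω‖ ^ (a-(d:ℝ)) * (min 1 (1 / ‖u - ω‖)) ^ (b-(d:ℝ))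
          ≤ 2^((d:ℝ)-a) * Cbr b d :=
        mul_le_mul hb1base bound2 (Real.rpow_nonneg hmnn _) (by positivity)
      calc ‖u‖ ^ (-δ) * ‖u - ω‖ ^ (a-(d:ℝ)) * (min 1 (1 / ‖u - ω‖)) ^ (b-(d:ℝ))
          = ‖u‖ ^ (-δ) * (‖u - ω‖ ^ (a-(d:ℝ)) * (min 1 (1 / ‖u - ω‖)) ^ (b-(d:ℝ))) := by ring
        _ ≤ ‖u‖ ^ (-δ) * (2^((d:ℝ)-a) * Cbr b d) :=
            mul_le_mul_of_nonneg_left t1 (Real.rpow_nonneg (norm_nonneg _) _)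
        _ = 2^((d:ℝ)-a) * Cbr b d * ‖u‖^(-δ) := by ring
    · -- outer region
      have hz2 : u ∈ (ball (0 : EuclideanSpace ℝ (Fin d)) 2)ᶜ := fun h => h2 (mem_ball_zero_iff.1 h)
      refine le_trans ?_ (le_add_left (le_add_left (le_refl _)))
      rw [psi4, indicator_of_mem hz2]
      refine ENNReal.ofReal_le_ofReal ?_
      have hu2 : 2 ≤ ‖u‖ := not_lt.1 h2
      have hu2pos : (0:ℝ) < ‖u‖ := by linarith
      have hge : ‖u‖ - 1 ≤ ‖u - ω‖ := by
        have := norm_sub_norm_le u ω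
        rw [hω] at this
        linarith
      have h12 : ‖u‖/2 ≤ ‖u - ω‖ := by linarith
      have hs21 : 1 ≤ ‖u - ω‖ := by linarith
      have hup : ‖u - ω‖ ≤ 2 * ‖u‖ := by
        have := norm_sub_le u ω; rw [hω] at this; linarith
      have hmin : min 1 (1 / ‖u - ω‖) = 1 / ‖u - ω‖ :=
        min_eq_right ((div_le_one hr1pos).2 hs21)
      have heq1 : (1 / ‖u - ω‖) ^ (b-(d:ℝ)) = ‖u - ω‖ ^ ((d:ℝ)-b) := by
        rw [one_div, Real.inv_rpow (norm_nonneg _), ← Real.rpow_neg (norm_nonneg _), neg_sub]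
      have heq2 : ‖u - ω‖ ^ (a-(d:ℝ)) * ‖u - ω‖ ^ ((d:ℝ)-b) = ‖u - ω‖ ^ (a-b) := by
        rw [← Real.rpow_add hr1pos]
        congr 1
        ring
      have claim : ‖u - ω‖ ^ (a-b) ≤ (2^(a-b) + 2^(b-a)) * ‖u‖^(a-b) := by
        rcases le_or_gt b a with hba | hab
        · have h3 : ‖u - ω‖ ^ (a-b) ≤ (2 * ‖u‖) ^ (a-b) :=
            Real.rpow_le_rpow (norm_nonneg _) hup (by linarith)
          refine h3.trans ?_
          rw [Real.mul_rpow (by norm_num) (norm_nonneg _)]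
          have u1 : (0:ℝ) ≤ 2^(b-a) := by positivity
          have u2 : (0:ℝ) ≤ ‖u‖^(a-b) := Real.rpow_nonneg (norm_nonneg _) _
          nlinarith
        · have h3 : ‖u - ω‖ ^ (a-b) ≤ (‖u‖/2) ^ (a-b) :=
            Real.rpow_le_rpow_of_nonpos (by positivity) h12 (by linarith)
          refine h3.trans ?_
          rw [Real.div_rpow (norm_nonneg _) (by norm_num), div_eq_mul_inv,
            ← Real.rpow_neg (by norm_num : (0:ℝ) ≤ 2), neg_sub]
          have u1 : (0:ℝ) ≤ 2^(a-b) := by positivity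
          have u2 : (0:ℝ) ≤ ‖u‖^(a-b) := Real.rpow_nonneg (norm_nonneg _) _
          nlinarith
      calc ‖u‖ ^ (-δ) * ‖u - ω‖ ^ (a-(d:ℝ)) * (min 1 (1 / ‖u - ω‖)) ^ (b-(d:ℝ))
          = ‖u‖ ^ (-δ) * ‖u - ω‖ ^ (a-b) := by
            rw [hmin, heq1, mul_assoc, heq2]
        _ ≤ ‖u‖ ^ (-δ) * ((2^(a-b) + 2^(b-a)) * ‖u‖^(a-b)) :=
            mul_le_mul_of_nonneg_left claim (Real.rpow_nonneg (norm_nonneg _) _)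
        _ = (2^(a-b) + 2^(b-a)) * ‖u‖^(a-b-δ) := by
            rw [show a - b - δ = (a-b) + (-δ) by ring, Real.rpow_add hu2pos]
            ring

lemma C1int {d : ℕ} (hd : 0 < d) {a b γ : ℝ} (ha : 0 < a) (haγ : a < γ) (hγd : γ < (d:ℝ))
    (hγ0 : 0 < γ) (hγb : γ < b) :
    ∃ A : ℝ≥0∞, A ≠ ⊤ ∧ ∀ ω : EuclideanSpace ℝ (Fin d), ‖ω‖ = 1 →
      (∫⁻ z, ENNReal.ofReal
        (‖ω - z‖ ^ (a - (d:ℝ)) * (min 1 (‖z‖ / ‖ω - z‖)) ^ (b - (d:ℝ)) * ‖z‖ ^ (-γ))) ≤ A := by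
  have hφm : Measurable (phi1 d a γ) := Measurable.indicator (by fun_prop) measurableSet_ball
  have hψ1m : Measurable (psi1 d a b γ) := Measurable.indicator (by fun_prop) measurableSet_ball
  refine ⟨(∫⁻ u, phi1 d a γ u) + ((∫⁻ z, psi1 d a b γ z) + (∫⁻ z, psi2 d a b γ z)), ?_, ?_⟩
  · have f1 : ∫⁻ u, phi1 d a γ u < ⊤ := by
      unfold phi1
      rw [lintegral_indicator measurableSet_ball]
      have : ∀ u : EuclideanSpace ℝ (Fin d), ENNReal.ofReal (2^γ * ‖u‖^(a-(d:ℝ)))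
          = ENNReal.ofReal (2^γ) * ENNReal.ofReal (‖u‖^(a-(d:ℝ))) := fun u =>
        ENNReal.ofReal_mul (by positivity)
      simp_rw [this]
      rw [lintegral_const_mul' _ _ ENNReal.ofReal_ne_top]
      exact ENNReal.mul_lt_top ENNReal.ofReal_lt_top
        (lint_ball_lt_top hd (by linarith) (by norm_num))
    have f2 : ∫⁻ z, psi1 d a b γ z < ⊤ := by
      unfold psi1
      rw [lintegral_indicator measurableSet_ball]
      have : ∀ u : EuclideanSpace ℝ (Fin d),
          ENNReal.ofReal ((2^((d:ℝ)-a) * Cbr b d) * ‖u‖^(b-(d:ℝ)-γ))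
          = ENNReal.ofReal (2^((d:ℝ)-a) * Cbr b d) * ENNReal.ofReal (‖u‖^(b-(d:ℝ)-γ)) := fun u =>
        ENNReal.ofReal_mul (mul_nonneg (by positivity) (Cbr_pos b d).le)
      simp_rw [this]
      rw [lintegral_const_mul' _ _ ENNReal.ofReal_ne_top]
      exact ENNReal.mul_lt_top ENNReal.ofReal_lt_top
        (lint_ball_lt_top hd (by linarith) (by norm_num))
    have f3 : ∫⁻ z, psi2 d a b γ z < ⊤ := by
      unfold psi2
      rw [lintegral_indicator measurableSet_ball.compl]
      have : ∀ u : EuclideanSpace ℝ (Fin d),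
          ENNReal.ofReal ((2^((d:ℝ)-a) * Cbr b d) * ‖u‖^(a-(d:ℝ)-γ))
          = ENNReal.ofReal (2^((d:ℝ)-a) * Cbr b d) * ENNReal.ofReal (‖u‖^(a-(d:ℝ)-γ)) := fun u =>
        ENNReal.ofReal_mul (mul_nonneg (by positivity) (Cbr_pos b d).le)
      simp_rw [this]
      rw [lintegral_const_mul' _ _ ENNReal.ofReal_ne_top]
      exact ENNReal.mul_lt_top ENNReal.ofReal_lt_top
        (lint_compl_lt_top hd (by linarith) (by norm_num))
    exact (ENNReal.add_lt_top.2 ⟨f1, ENNReal.add_lt_top.2 ⟨f2, f3⟩⟩).ne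
  · intro ω hω
    calc ∫⁻ z, ENNReal.ofReal
          (‖ω - z‖ ^ (a - (d:ℝ)) * (min 1 (‖z‖ / ‖ω - z‖)) ^ (b - (d:ℝ)) * ‖z‖ ^ (-γ))
        ≤ ∫⁻ z, (phi1 d a γ (z - ω) + (psi1 d a b γ z + psi2 d a b γ z)) :=
          lintegral_mono fun z => pointwise_C1 ha haγ hγd hγ0 ω z hω
      _ = (∫⁻ z, phi1 d a γ (z - ω)) + ∫⁻ z, (psi1 d a b γ z + psi2 d a b γ z) :=
          lintegral_add_left (hφm.comp (measurable_id.sub measurable_const)) _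
      _ = (∫⁻ z, phi1 d a γ (z - ω)) + ((∫⁻ z, psi1 d a b γ z) + ∫⁻ z, psi2 d a b γ z) := by
          rw [lintegral_add_left hψ1m]
      _ = (∫⁻ u, phi1 d a γ u) + ((∫⁻ z, psi1 d a b γ z) + ∫⁻ z, psi2 d a b γ z) := by
          congr 1
          simp_rw [sub_eq_add_neg]
          exact lintegral_add_right_eq_self (phi1 d a γ) (-ω)

lemma C2int {d : ℕ} (hd : 0 < d) {a b δ : ℝ} (ha : 0 < a) (had : a < (d:ℝ)) (hδ0 : 0 < δ)
    (hδd : δ < (d:ℝ)) (habδ : a - b - δ < -(d:ℝ)) :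
    ∃ B : ℝ≥0∞, B ≠ ⊤ ∧ ∀ ω : EuclideanSpace ℝ (Fin d), ‖ω‖ = 1 →
      (∫⁻ u, ENNReal.ofReal
        (‖u‖ ^ (-δ) * ‖u - ω‖ ^ (a - (d:ℝ)) * (min 1 (1 / ‖u - ω‖)) ^ (b - (d:ℝ)))) ≤ B := by
  have hφm : Measurable (phi1 d a δ) := Measurable.indicator (by fun_prop) measurableSet_ball
  have hψ3m : Measurable (psi3 d a b δ) := Measurable.indicator (by fun_prop) measurableSet_ball
  refine ⟨(∫⁻ u, phi1 d a δ u) + ((∫⁻ z, psi3 d a b δ z) + (∫⁻ z, psi4 d a b δ z)), ?_, ?_⟩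
  · have f1 : ∫⁻ u, phi1 d a δ u < ⊤ := by
      unfold phi1
      rw [lintegral_indicator measurableSet_ball]
      have : ∀ u : EuclideanSpace ℝ (Fin d), ENNReal.ofReal (2^δ * ‖u‖^(a-(d:ℝ)))
          = ENNReal.ofReal (2^δ) * ENNReal.ofReal (‖u‖^(a-(d:ℝ))) := fun u =>
        ENNReal.ofReal_mul (by positivity)
      simp_rw [this]
      rw [lintegral_const_mul' _ _ ENNReal.ofReal_ne_top]
      exact ENNReal.mul_lt_top ENNReal.ofReal_lt_top
        (lint_ball_lt_top hd (by linarith) (by norm_num))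
    have f2 : ∫⁻ z, psi3 d a b δ z < ⊤ := by
      unfold psi3
      rw [lintegral_indicator measurableSet_ball]
      have : ∀ u : EuclideanSpace ℝ (Fin d),
          ENNReal.ofReal ((2^((d:ℝ)-a) * Cbr b d) * ‖u‖^(-δ))
          = ENNReal.ofReal (2^((d:ℝ)-a) * Cbr b d) * ENNReal.ofReal (‖u‖^(-δ)) := fun u =>
        ENNReal.ofReal_mul (mul_nonneg (by positivity) (Cbr_pos b d).le)
      simp_rw [this]
      rw [lintegral_const_mul' _ _ ENNReal.ofReal_ne_top]
      exact ENNReal.mul_lt_top ENNReal.ofReal_lt_top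
        (lint_ball_lt_top hd (by linarith) (by norm_num))
    have f3 : ∫⁻ z, psi4 d a b δ z < ⊤ := by
      unfold psi4
      rw [lintegral_indicator measurableSet_ball.compl]
      have : ∀ u : EuclideanSpace ℝ (Fin d),
          ENNReal.ofReal ((2^(a-b) + 2^(b-a)) * ‖u‖^(a-b-δ))
          = ENNReal.ofReal (2^(a-b) + 2^(b-a)) * ENNReal.ofReal (‖u‖^(a-b-δ)) := fun u =>
        ENNReal.ofReal_mul (by positivity)
      simp_rw [this]
      rw [lintegral_const_mul' _ _ ENNReal.ofReal_ne_top]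
      exact ENNReal.mul_lt_top ENNReal.ofReal_lt_top
        (lint_compl_lt_top hd (by linarith) (by norm_num))
    exact (ENNReal.add_lt_top.2 ⟨f1, ENNReal.add_lt_top.2 ⟨f2, f3⟩⟩).ne
  · intro ω hω
    calc ∫⁻ u, ENNReal.ofReal
          (‖u‖ ^ (-δ) * ‖u - ω‖ ^ (a - (d:ℝ)) * (min 1 (1 / ‖u - ω‖)) ^ (b - (d:ℝ)))
        ≤ ∫⁻ u, (phi1 d a δ (u - ω) + (psi3 d a b δ u + psi4 d a b δ u)) :=
          lintegral_mono fun u => pointwise_C2 had hδ0 ω u hω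
      _ = (∫⁻ u, phi1 d a δ (u - ω)) + ∫⁻ u, (psi3 d a b δ u + psi4 d a b δ u) :=
          lintegral_add_left (hφm.comp (measurable_id.sub measurable_const)) _
      _ = (∫⁻ u, phi1 d a δ (u - ω)) + ((∫⁻ z, psi3 d a b δ z) + ∫⁻ z, psi4 d a b δ z) := by
          rw [lintegral_add_left hψ3m]
      _ = (∫⁻ u, phi1 d a δ u) + ((∫⁻ z, psi3 d a b δ z) + ∫⁻ z, psi4 d a b δ z) := by
          congr 1
          simp_rw [sub_eq_add_neg]
          exact lintegral_add_right_eq_self (phi1 d a δ) (-ω)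

lemma cond1 {d : ℕ} {a b γ : ℝ} {A : ℝ≥0∞}
    (hA : ∀ ω : EuclideanSpace ℝ (Fin d), ‖ω‖ = 1 →
      (∫⁻ z, ENNReal.ofReal
        (‖ω - z‖ ^ (a - (d:ℝ)) * (min 1 (‖z‖ / ‖ω - z‖)) ^ (b - (d:ℝ)) * ‖z‖ ^ (-γ))) ≤ A)
    (x : EuclideanSpace ℝ (Fin d)) (hx : x ≠ 0) :
    ∫⁻ y, ENNReal.ofReal (‖x‖ ^ (-a) * ‖x - y‖ ^ (a - (d:ℝ)) *
        (min 1 (‖y‖ / ‖x - y‖)) ^ (b - (d:ℝ)) * ‖y‖ ^ (-γ))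
      ≤ A * ENNReal.ofReal (‖x‖ ^ (-γ)) := by
  set c := ‖x‖ with hc
  have hcpos : 0 < c := norm_pos_iff.2 hx
  set ω := c⁻¹ • x with hωdef
  have hω : ‖ω‖ = 1 := by
    rw [hωdef, norm_smul, norm_inv, Real.norm_eq_abs, abs_of_pos hcpos, ← hc,
      inv_mul_cancel₀ hcpos.ne']
  have hxω : x = c • ω := by
    rw [hωdef, smul_smul, mul_inv_cancel₀ hcpos.ne', one_smul]
  have key : ∀ y : EuclideanSpace ℝ (Fin d),
      (‖x‖ ^ (-a) * ‖x - c • y‖ ^ (a - (d:ℝ)) *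
        (min 1 (‖c • y‖ / ‖x - c • y‖)) ^ (b - (d:ℝ)) * ‖c • y‖ ^ (-γ))
      = (c ^ (-(d:ℝ)-γ)) * (‖ω - y‖ ^ (a - (d:ℝ)) *
        (min 1 (‖y‖ / ‖ω - y‖)) ^ (b - (d:ℝ)) * ‖y‖ ^ (-γ)) := by
    intro y
    have h1 : ‖x - c • y‖ = c * ‖ω - y‖ := by
      rw [hxω, ← smul_sub, norm_smul, Real.norm_eq_abs, abs_of_pos hcpos]
    have h2 : ‖c • y‖ = c * ‖y‖ := by
      rw [norm_smul, Real.norm_eq_abs, abs_of_pos hcpos]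
    have h3 : ‖c • y‖ / ‖x - c • y‖ = ‖y‖ / ‖ω - y‖ := by
      rw [h1, h2, mul_div_mul_left _ _ hcpos.ne']
    rw [h3, h1, h2, ← hc,
      Real.mul_rpow hcpos.le (norm_nonneg _), Real.mul_rpow hcpos.le (norm_nonneg _),
      show -(d:ℝ)-γ = (-a) + ((a - (d:ℝ)) + (-γ)) by ring,
      Real.rpow_add hcpos, Real.rpow_add hcpos]
    ring
  calc ∫⁻ y, ENNReal.ofReal (‖x‖ ^ (-a) * ‖x - y‖ ^ (a - (d:ℝ)) *
        (min 1 (‖y‖ / ‖x - y‖)) ^ (b - (d:ℝ)) * ‖y‖ ^ (-γ))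
      = ENNReal.ofReal (c ^ d) * ∫⁻ y, ENNReal.ofReal (‖x‖ ^ (-a) * ‖x - c • y‖ ^ (a - (d:ℝ)) *
          (min 1 (‖c • y‖ / ‖x - c • y‖)) ^ (b - (d:ℝ)) * ‖c • y‖ ^ (-γ)) :=
        lintegral_eq_smul _ hcpos
    _ = ENNReal.ofReal (c ^ d) * (ENNReal.ofReal (c ^ (-(d:ℝ)-γ)) *
          ∫⁻ y, ENNReal.ofReal (‖ω - y‖ ^ (a - (d:ℝ)) *
            (min 1 (‖y‖ / ‖ω - y‖)) ^ (b - (d:ℝ)) * ‖y‖ ^ (-γ))) := by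
        congr 1
        simp_rw [key, ENNReal.ofReal_mul (Real.rpow_nonneg hcpos.le _)]
        rw [lintegral_const_mul' _ _ ENNReal.ofReal_ne_top]
    _ = ENNReal.ofReal (c ^ (-γ)) * ∫⁻ y, ENNReal.ofReal (‖ω - y‖ ^ (a - (d:ℝ)) *
          (min 1 (‖y‖ / ‖ω - y‖)) ^ (b - (d:ℝ)) * ‖y‖ ^ (-γ)) := by
        rw [← mul_assoc, ← ENNReal.ofReal_mul (by positivity)]
        congr 2
        rw [← Real.rpow_natCast c d, ← Real.rpow_add hcpos]
        congr 1
        ring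
    _ ≤ ENNReal.ofReal (c ^ (-γ)) * A := mul_le_mul_right (hA ω hω) _
    _ = A * ENNReal.ofReal (‖x‖ ^ (-γ)) := by rw [mul_comm, hc]

lemma cond2 {d : ℕ} {a b δ' : ℝ} (ha : 0 < a) (hδ' : 0 < δ') {B : ℝ≥0∞}
    (hB : ∀ ω : EuclideanSpace ℝ (Fin d), ‖ω‖ = 1 →
      (∫⁻ u, ENNReal.ofReal
        (‖u‖ ^ (-(a + δ')) * ‖u - ω‖ ^ (a - (d:ℝ)) * (min 1 (1 / ‖u - ω‖)) ^ (b - (d:ℝ)))) ≤ B)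
    (y : EuclideanSpace ℝ (Fin d)) (hy : y ≠ 0) :
    ∫⁻ x, ENNReal.ofReal (‖x‖ ^ (-a) * ‖x - y‖ ^ (a - (d:ℝ)) *
        (min 1 (‖y‖ / ‖x - y‖)) ^ (b - (d:ℝ)) * ‖x‖ ^ (-δ'))
      ≤ B * ENNReal.ofReal (‖y‖ ^ (-δ')) := by
  set c := ‖y‖ with hc
  have hcpos : 0 < c := norm_pos_iff.2 hy
  set ω := c⁻¹ • y with hωdef
  have hω : ‖ω‖ = 1 := by
    rw [hωdef, norm_smul, norm_inv, Real.norm_eq_abs, abs_of_pos hcpos, ← hc,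
      inv_mul_cancel₀ hcpos.ne']
  have hyω : y = c • ω := by
    rw [hωdef, smul_smul, mul_inv_cancel₀ hcpos.ne', one_smul]
  have key : ∀ u : EuclideanSpace ℝ (Fin d),
      (‖c • u‖ ^ (-a) * ‖c • u - y‖ ^ (a - (d:ℝ)) *
        (min 1 (‖y‖ / ‖c • u - y‖)) ^ (b - (d:ℝ)) * ‖c • u‖ ^ (-δ'))
      = (c ^ (-(d:ℝ)-δ')) * (‖u‖ ^ (-(a + δ')) * ‖u - ω‖ ^ (a - (d:ℝ)) *
        (min 1 (1 / ‖u - ω‖)) ^ (b - (d:ℝ))) := by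
    intro u
    have h1 : ‖c • u - y‖ = c * ‖u - ω‖ := by
      rw [hyω, ← smul_sub, norm_smul, Real.norm_eq_abs, abs_of_pos hcpos]
    have h2 : ‖c • u‖ = c * ‖u‖ := by
      rw [norm_smul, Real.norm_eq_abs, abs_of_pos hcpos]
    have h3 : ‖y‖ / ‖c • u - y‖ = 1 / ‖u - ω‖ := by
      rw [h1, ← hc]
      have := mul_div_mul_left 1 ‖u - ω‖ hcpos.ne'
      rw [mul_one] at this
      exact this
    have h4 : ‖u‖ ^ (-(a + δ')) = ‖u‖ ^ (-a) * ‖u‖ ^ (-δ') := by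
      rw [show -(a + δ') = (-a) + (-δ') by ring]
      exact Real.rpow_add' (norm_nonneg u) (by intro h; nlinarith)
    rw [h3, h1, h2, h4,
      Real.mul_rpow hcpos.le (norm_nonneg _), Real.mul_rpow hcpos.le (norm_nonneg _),
      Real.mul_rpow hcpos.le (norm_nonneg _),
      show -(d:ℝ)-δ' = (-a) + ((a - (d:ℝ)) + (-δ')) by ring,
      Real.rpow_add hcpos, Real.rpow_add hcpos]
    ring
  calc ∫⁻ x, ENNReal.ofReal (‖x‖ ^ (-a) * ‖x - y‖ ^ (a - (d:ℝ)) *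
        (min 1 (‖y‖ / ‖x - y‖)) ^ (b - (d:ℝ)) * ‖x‖ ^ (-δ'))
      = ENNReal.ofReal (c ^ d) * ∫⁻ u, ENNReal.ofReal (‖c • u‖ ^ (-a) * ‖c • u - y‖ ^ (a - (d:ℝ)) *
          (min 1 (‖y‖ / ‖c • u - y‖)) ^ (b - (d:ℝ)) * ‖c • u‖ ^ (-δ')) :=
        lintegral_eq_smul _ hcpos
    _ = ENNReal.ofReal (c ^ d) * (ENNReal.ofReal (c ^ (-(d:ℝ)-δ')) *
          ∫⁻ u, ENNReal.ofReal (‖u‖ ^ (-(a + δ')) * ‖u - ω‖ ^ (a - (d:ℝ)) *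
            (min 1 (1 / ‖u - ω‖)) ^ (b - (d:ℝ)))) := by
        congr 1
        simp_rw [key, ENNReal.ofReal_mul (Real.rpow_nonneg hcpos.le _)]
        rw [lintegral_const_mul' _ _ ENNReal.ofReal_ne_top]
    _ = ENNReal.ofReal (c ^ (-δ')) * ∫⁻ u, ENNReal.ofReal (‖u‖ ^ (-(a + δ')) *
          ‖u - ω‖ ^ (a - (d:ℝ)) * (min 1 (1 / ‖u - ω‖)) ^ (b - (d:ℝ))) := by
        rw [← mul_assoc, ← ENNReal.ofReal_mul (by positivity)]
        congr 2
        rw [← Real.rpow_natCast c d, ← Real.rpow_add hcpos]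
        congr 1
        ring
    _ ≤ ENNReal.ofReal (c ^ (-δ')) * B := mul_le_mul_right (hB ω hω) _
    _ = B * ENNReal.ofReal (‖y‖ ^ (-δ')) := by rw [mul_comm, hc]

/-- The generalized Hardy inequality (Theorem 1.5 of the paper) in kernel form: the operator
with kernel `K(x,y) = |x|^{−αs} |x−y|^{αs−d} min(1,|y|/|x−y|)^{β−d}` is bounded on
`L^p(ℝ^d)` for `max(1, d/β) < p < d/(αs)`. -/
theorem generalized_hardy_kernel_bounded
    (d : ℕ) (hd : 1 ≤ d) (α β s p : ℝ)
    (hα1 : 1 < α) (hα2 : α < 2) (hα3 : α < ((d : ℝ) + 2) / 2)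
    (hβ1 : ((d : ℝ) + α) / 2 < β) (hβ2 : β < (d : ℝ) + α)
    (hs1 : 0 < s) (hs2 : s ≤ 1)
    (hp1 : max 1 ((d : ℝ) / β) < p) (hp2 : p < (d : ℝ) / (α * s)) :
    ∃ C : ℝ, 0 < C ∧
      ∀ g : EuclideanSpace ℝ (Fin d) → ℝ, MemLp g (ENNReal.ofReal p) volume →
        (∫⁻ x, (∫⁻ y, ENNReal.ofReal
            (‖x‖ ^ (-(α * s)) * ‖x - y‖ ^ (α * s - d) *
              min 1 (‖y‖ / ‖x - y‖) ^ (β - d) * |g y|)) ^ p) ^ (1 / p)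
          ≤ ENNReal.ofReal C * eLpNorm g (ENNReal.ofReal p) volume := by
  have hd0 : 0 < d := hd
  haveI := nontrivial_E hd0
  have hdR : (1:ℝ) ≤ (d:ℝ) := by exact_mod_cast hd
  have hp : 1 < p := lt_of_le_of_lt (le_max_left _ _) hp1
  have hp0 : 0 < p := by linarith
  have hβ0 : 0 < β := by linarith
  have hdβp : (d:ℝ)/β < p := lt_of_le_of_lt (le_max_right _ _) hp1
  set a := α * s with hadef
  have ha : 0 < a := mul_pos (by linarith) hs1
  set q := p/(p-1) with hqdef
  have hpq : p.HolderConjugate q := Real.HolderConjugate.conjExponent hp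
  have hq1 : 1 < q := hpq.symm.lt
  have hq0 : 0 < q := by linarith
  set γ := (d:ℝ)/p with hγdef
  set δ' := (d:ℝ)/q with hδ'def
  have hγ0 : 0 < γ := div_pos (by linarith) hp0
  have hδ'0 : 0 < δ' := div_pos (by linarith) hq0
  have hγd : γ < (d:ℝ) := by
    rw [hγdef]
    exact div_lt_self (by linarith) hp
  have haγ : a < γ := by
    have h1 : p * a < (d:ℝ) := (lt_div_iff₀ ha).1 hp2
    rw [hγdef, lt_div_iff₀ hp0]
    linarith
  have hγβ : γ < β := by
    have h1 : (d:ℝ) < p * β := by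
      have := (div_lt_iff₀ hβ0).1 hdβp
      linarith
    rw [hγdef, div_lt_iff₀ hp0]
    linarith
  have hsum : p⁻¹ + q⁻¹ = 1 := hpq.inv_add_inv_eq_one
  have hδ'eq : δ' = (d:ℝ) - γ := by
    rw [hδ'def, hγdef, div_eq_mul_inv, div_eq_mul_inv, show q⁻¹ = 1 - p⁻¹ by linarith]
    ring
  have hδd : a + δ' < (d:ℝ) := by
    have : a < γ := haγ
    linarith [hδ'eq]
  have habδ : a - β - (a + δ') < -(d:ℝ)  := by
    have : γ < β := hγβ
    linarith [hδ'eq]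
  obtain ⟨A, hAne, hA⟩ := C1int hd0 ha haγ hγd hγ0 hγβ (b := β)
  obtain ⟨B, hBne, hB⟩ := C2int hd0 (b := β) ha (by linarith) (by linarith : 0 < a + δ')
    hδd habδ
  set D := A ^ (p/q) * B with hDdef
  have hDne : D ≠ ⊤ :=
    ENNReal.mul_ne_top (ENNReal.rpow_ne_top_of_nonneg (by positivity) hAne) hBne
  have hD1p : D ^ (1/p) ≠ ⊤ := ENNReal.rpow_ne_top_of_nonneg (by positivity) hDne
  refine ⟨(D ^ (1/p)).toReal + 1, by positivity, ?_⟩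
  intro g hg
  obtain ⟨g', hg'sm, hgg'⟩ := hg.1
  have hg'm : Measurable g' := hg'sm.measurable
  set K : EuclideanSpace ℝ (Fin d) → EuclideanSpace ℝ (Fin d) → ℝ≥0∞ := fun x y =>
    ENNReal.ofReal (‖x‖ ^ (-a) * ‖x - y‖ ^ (a - (d:ℝ)) *
      (min 1 (‖y‖ / ‖x - y‖)) ^ (β - (d:ℝ))) with hKdef
  have hprod_nonneg : ∀ x y : EuclideanSpace ℝ (Fin d),
      0 ≤ ‖x‖ ^ (-a) * ‖x - y‖ ^ (a - (d:ℝ)) * (min 1 (‖y‖ / ‖x - y‖)) ^ (β - (d:ℝ)) :=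
    fun x y => mul_nonneg
      (mul_nonneg (Real.rpow_nonneg (norm_nonneg _) _) (Real.rpow_nonneg (norm_nonneg _) _))
      (Real.rpow_nonneg (min_ratio_nonneg _ _ (norm_nonneg _) (norm_nonneg _)) _)
  have hK : Measurable (Function.uncurry K) := by
    apply ENNReal.measurable_ofReal.comp
    fun_prop
  set h : EuclideanSpace ℝ (Fin d) → ℝ≥0∞ := fun z =>
    ENNReal.ofReal (‖z‖ ^ (-(γ/q))) with hhdef
  have hh : Measurable h := by
    apply ENNReal.measurable_ofReal.comp
    fun_prop
  have hae0 : ∀ᵐ x : EuclideanSpace ℝ (Fin d), x ≠ 0 := by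
    rw [ae_iff]
    have hset : {x : EuclideanSpace ℝ (Fin d) | ¬ x ≠ 0} = {0} := by ext x; simp
    rw [hset]
    exact measure_singleton 0
  have hh' : ∀ᵐ x : EuclideanSpace ℝ (Fin d), 0 < h x ∧ h x < ⊤ := by
    filter_upwards [hae0] with x hx
    refine ⟨ENNReal.ofReal_pos.2 (Real.rpow_pos_of_pos (norm_pos_iff.2 hx) _), ENNReal.ofReal_lt_top⟩
  have hpowq : ∀ z : EuclideanSpace ℝ (Fin d), (h z) ^ q = ENNReal.ofReal (‖z‖ ^ (-γ)) := by
    intro z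
    rw [hhdef]
    rw [ENNReal.ofReal_rpow_of_nonneg (Real.rpow_nonneg (norm_nonneg _) _) hq0.le,
      ← Real.rpow_mul (norm_nonneg _),
      show -(γ/q) * q = -γ by rw [neg_mul, div_mul_cancel₀ _ hq0.ne']]
  have hpowp : ∀ z : EuclideanSpace ℝ (Fin d), (h z) ^ p = ENNReal.ofReal (‖z‖ ^ (-δ')) := by
    intro z
    have hexp : -(γ/q) * p = -δ' := by
      rw [hγdef, hδ'def]
      field_simp
    rw [hhdef]
    rw [ENNReal.ofReal_rpow_of_nonneg (Real.rpow_nonneg (norm_nonneg _) _) hp0.le,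
      ← Real.rpow_mul (norm_nonneg _), hexp]
  have h1 : ∀ᵐ x : EuclideanSpace ℝ (Fin d),
      ∫⁻ y, K x y * (h y) ^ q ≤ A * (h x) ^ q := by
    filter_upwards [hae0] with x hx
    rw [hpowq x]
    calc ∫⁻ y, K x y * (h y) ^ q
        = ∫⁻ y, ENNReal.ofReal (‖x‖ ^ (-a) * ‖x - y‖ ^ (a - (d:ℝ)) *
            (min 1 (‖y‖ / ‖x - y‖)) ^ (β - (d:ℝ)) * ‖y‖ ^ (-γ)) := by
          refine lintegral_congr fun y => ?_
          rw [hpowq y, hKdef]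
          exact (ENNReal.ofReal_mul (hprod_nonneg x y)).symm
      _ ≤ A * ENNReal.ofReal (‖x‖ ^ (-γ)) := cond1 hA x hx
  have h2 : ∀ᵐ y : EuclideanSpace ℝ (Fin d),
      ∫⁻ x, K x y * (h x) ^ p ≤ B * (h y) ^ p := by
    filter_upwards [hae0] with y hy
    rw [hpowp y]
    calc ∫⁻ x, K x y * (h x) ^ p
        = ∫⁻ x, ENNReal.ofReal (‖x‖ ^ (-a) * ‖x - y‖ ^ (a - (d:ℝ)) *
            (min 1 (‖y‖ / ‖x - y‖)) ^ (β - (d:ℝ)) * ‖x‖ ^ (-δ')) := by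
          refine lintegral_congr fun x => ?_
          rw [hpowp x, hKdef]
          exact (ENNReal.ofReal_mul (hprod_nonneg x y)).symm
      _ ≤ B * ENNReal.ofReal (‖y‖ ^ (-δ')) := cond2 ha hδ'0 hB y hy
  set f : EuclideanSpace ℝ (Fin d) → ℝ≥0∞ := fun y => ENNReal.ofReal |g' y| with hfdef
  have hf : Measurable f := ENNReal.measurable_ofReal.comp hg'm.abs
  have schur := schur_test hK hh hh' hpq hAne hBne h1 h2 hf
  have inner_eq : ∀ x : EuclideanSpace ℝ (Fin d),
      ∫⁻ y, ENNReal.ofReal (‖x‖ ^ (-a) * ‖x - y‖ ^ (a - (d:ℝ)) *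
          (min 1 (‖y‖ / ‖x - y‖)) ^ (β - (d:ℝ)) * |g y|)
        = ∫⁻ y, K x y * f y := by
    intro x
    refine lintegral_congr_ae ?_
    filter_upwards [hgg'] with y hy
    rw [hy, hKdef, hfdef]
    exact ENNReal.ofReal_mul (hprod_nonneg x y)
  have hfp : ∫⁻ y, (f y) ^ p
      = ∫⁻ y, ‖g' y‖ₑ ^ p := by
    refine lintegral_congr fun y => ?_
    rw [hfdef, Real.enorm_eq_ofReal_abs]
  have hpne0 : (ENNReal.ofReal p) ≠ 0 := (ENNReal.ofReal_pos.2 hp0).ne'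
  have hlp : eLpNorm g' (ENNReal.ofReal p) volume = (∫⁻ y, (f y) ^ p) ^ (1/p) := by
    rw [eLpNorm_eq_lintegral_rpow_enorm_toReal hpne0 ENNReal.ofReal_ne_top,
      ENNReal.toReal_ofReal hp0.le, hfp]
  have hCle : D ^ (1/p) ≤ ENNReal.ofReal ((D ^ (1/p)).toReal + 1) := by
    conv_lhs => rw [← ENNReal.ofReal_toReal hD1p]
    exact ENNReal.ofReal_le_ofReal (by linarith [ENNReal.toReal_nonneg (a := D ^ (1/p))])
  calc (∫⁻ x, (∫⁻ y, ENNReal.ofReal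
          (‖x‖ ^ (-a) * ‖x - y‖ ^ (a - (d:ℝ)) *
            (min 1 (‖y‖ / ‖x - y‖)) ^ (β - (d:ℝ)) * |g y|)) ^ p) ^ (1 / p)
      = (∫⁻ x, (∫⁻ y, K x y * f y) ^ p) ^ (1 / p) := by
        congr 1
        exact lintegral_congr fun x => by rw [inner_eq x]
    _ ≤ (D * ∫⁻ y, (f y) ^ p) ^ (1 / p) := by
        refine ENNReal.rpow_le_rpow ?_ (by positivity)
        rw [hDdef]
        exact schur
    _ = D ^ (1/p) * (∫⁻ y, (f y) ^ p) ^ (1/p) :=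
        ENNReal.mul_rpow_of_nonneg _ _ (by positivity)
    _ = D ^ (1/p) * eLpNorm g (ENNReal.ofReal p) volume := by
        rw [hlp.symm, eLpNorm_congr_ae hgg']
    _ ≤ ENNReal.ofReal ((D ^ (1/p)).toReal + 1) * eLpNorm g (ENNReal.ofReal p) volume :=
        mul_le_mul_left hCle _
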